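/- Let (X,μ) be a standard probability space, A a Borel set with μ(A) < 1 − 2^{-k}, and B ⊇ A with μ(B∖A) = 2^{-k}. Then {T ∈ Aut*(X,μ) : μ(T(A)∖A) ≤ 2^{-k}} = H_{X∖A} · G(A,B), where H_{X∖A} is the group of measure-preserving transformations supported in X∖A and G(A,B) = {T ∈ Aut*(X,μ) : T(A) ⊆ B mod null}. -/

import Mathlib

open MeasureTheory ENNReal Set Filter Topology

namespace Stmt18Aux

variable {X : Type*} [MeasurableSpace X]

lemma measure_inter_eq_of_diff_null (μ : Measure X) {P2 P : Set X} (h : P2 ⊆ P)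
    (hnull : μ (P \ P2) = 0) (s : Set X) : μ (P ∩ s) = μ (P2 ∩ s) := by
  refine le_antisymm ?_ (measure_mono (inter_subset_inter_left _ h))
  calc μ (P ∩ s) ≤ μ ((P2 ∩ s) ∪ (P \ P2)) := by
        refine measure_mono fun x hx => ?_
        by_cases h2 : x ∈ P2
        · exact Or.inl ⟨h2, hx.2⟩
        · exact Or.inr ⟨hx.1, h2⟩
    _ ≤ μ (P2 ∩ s) + μ (P \ P2) := measure_union_le _ _
    _ = μ (P2 ∩ s) := by rw [hnull, add_zero]

lemma continuous_cdf (ρ : Measure ℝ) [IsFiniteMeasure ρ] [NullSingletonClass ρ] :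
    Continuous fun a => (ρ (Iic a)).toReal := by
  have hmono : ∀ u v : ℝ, u ≤ v → (ρ (Iic u)).toReal ≤ (ρ (Iic v)).toReal := fun u v huv =>
    ENNReal.toReal_mono (measure_ne_top _ _) (measure_mono (Iic_subset_Iic.2 huv))
  rw [Metric.continuous_iff]
  intro b ε hε
  have h0 : ∀ᶠ δ in 𝓝 (0 : ℝ), ρ (Icc (b - δ) (b + δ)) < ENNReal.ofReal ε :=
    (tendsto_measure_Icc ρ b).eventually_lt_const (ENNReal.ofReal_pos.2 hε)
  obtain ⟨r, hr, hball⟩ := Metric.eventually_nhds_iff.1 h0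
  set δ := r / 2 with hδdef
  have hδpos : 0 < δ := by positivity
  have hδ : ρ (Icc (b - δ) (b + δ)) < ENNReal.ofReal ε := by
    apply hball
    rw [Real.dist_eq, sub_zero, abs_of_pos hδpos]
    linarith
  set c := (ρ (Icc (b - δ) (b + δ))).toReal with hc
  have hcε : c < ε := by
    rw [hc, ← ENNReal.lt_ofReal_iff_toReal_lt (measure_ne_top _ _)]
    exact hδ
  have key : ∀ u v : ℝ, u ≤ v → b - δ ≤ u → v ≤ b + δ →
      (ρ (Iic v)).toReal ≤ (ρ (Iic u)).toReal + c := by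
    intro u v huv hu hv
    have hsub : Iic v ⊆ Iic u ∪ Icc (b - δ) (b + δ) := by
      intro x hx
      rcases le_or_gt x u with h | h
      · exact Or.inl h
      · exact Or.inr ⟨le_trans hu h.le, le_trans hx hv⟩
    have h1 : ρ (Iic v) ≤ ρ (Iic u) + ρ (Icc (b - δ) (b + δ)) :=
      le_trans (measure_mono hsub) (measure_union_le _ _)
    have h2 := ENNReal.toReal_mono
      (by exact ENNReal.add_ne_top.2 ⟨measure_ne_top _ _, measure_ne_top _ _⟩) h1
    rwa [ENNReal.toReal_add (measure_ne_top _ _) (measure_ne_top _ _)] at h2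
  refine ⟨δ, hδpos, fun y hy => ?_⟩
  rw [Real.dist_eq] at hy
  have hy1 : b - δ ≤ y := by cases abs_lt.1 hy; linarith
  have hy2 : y ≤ b + δ := by cases abs_lt.1 hy; linarith
  rw [Real.dist_eq, abs_sub_lt_iff]
  rcases le_total y b with h | h
  · have h1 := key y b h hy1 (by linarith)
    have h2 := hmono y b h
    constructor <;> linarith
  · have h1 := key b y h (by linarith) hy2
    have h2 := hmono b y h
    constructor <;> linarith

lemma tendsto_cdf_atTop (ρ : Measure ℝ) [IsFiniteMeasure ρ] :
    Tendsto (fun a => (ρ (Iic a)).toReal) atTop (𝓝 (ρ univ).toReal) :=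
  (ENNReal.tendsto_toReal (measure_ne_top _ _)).comp (tendsto_measure_Iic_atTop ρ)

lemma tendsto_cdf_seq_atBot (ρ : Measure ℝ) [IsFiniteMeasure ρ] :
    Tendsto (fun n : ℕ => ρ (Iic (-(n : ℝ)))) atTop (𝓝 0) := by
  have h1 : (⋂ n : ℕ, Iic (-(n : ℝ))) = ∅ := by
    ext x
    simp only [mem_iInter, mem_Iic, mem_empty_iff_false, iff_false, not_forall, not_le]
    obtain ⟨n, hn⟩ := exists_nat_gt (-x)
    exact ⟨n, by linarith⟩
  have := tendsto_measure_iInter_atTop (μ := ρ)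
    (fun n : ℕ => (measurableSet_Iic (a := -(n:ℝ))).nullMeasurableSet)
    (fun i j hij => Iic_subset_Iic.2 (by exact_mod_cast neg_le_neg (Nat.cast_le.2 hij)))
    ⟨0, measure_ne_top _ _⟩
  rwa [h1, measure_empty] at this

lemma map_cdf (ρ : Measure ℝ) [IsFiniteMeasure ρ] [NullSingletonClass ρ] :
    ρ.map (fun a => (ρ (Iic a)).toReal) = volume.restrict (Ioc 0 (ρ univ).toReal) := by
  set F := fun a => (ρ (Iic a)).toReal with hF
  set m := (ρ univ).toReal with hm
  have hFmono : Monotone F := fun u v huv =>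
    ENNReal.toReal_mono (measure_ne_top _ _) (measure_mono (Iic_subset_Iic.2 huv))
  have hFmeas : Measurable F := hFmono.measurable
  have hFcont : Continuous F := continuous_cdf ρ
  have hF0 : ∀ a, 0 ≤ F a := fun a => ENNReal.toReal_nonneg
  have hFm : ∀ a, F a ≤ m := fun a =>
    ENNReal.toReal_mono (measure_ne_top _ _) (measure_mono (subset_univ _))
  have hm0 : 0 ≤ m := ENNReal.toReal_nonneg
  haveI : IsFiniteMeasure (volume.restrict (Ioc 0 m)) :=
    ⟨by rw [Measure.restrict_apply_univ]; exact measure_Ioc_lt_top⟩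
  refine Measure.ext_of_Iic _ _ fun t => ?_
  rw [Measure.map_apply hFmeas measurableSet_Iic, Measure.restrict_apply measurableSet_Iic]
  have hIoc : Iic t ∩ Ioc 0 m = Ioc 0 (min t m) := by
    ext x
    simp only [mem_inter_iff, mem_Iic, mem_Ioc, le_min_iff]
    tauto
  rw [hIoc, Real.volume_Ioc]
  rcases lt_or_ge t 0 with ht | ht
  · have h1 : F ⁻¹' Iic t = ∅ := by
      ext a; simp only [mem_preimage, mem_Iic, mem_empty_iff_false, iff_false, not_le]
      exact lt_of_lt_of_le ht (hF0 a)
    rw [h1, measure_empty]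
    symm
    rw [ENNReal.ofReal_eq_zero]
    have : min t m ≤ t := min_le_left _ _
    linarith
  rcases le_or_gt m t with htm | htm
  · have h1 : F ⁻¹' Iic t = univ := eq_univ_of_forall fun a => le_trans (hFm a) htm
    rw [h1, min_eq_right htm, sub_zero, hm, ENNReal.ofReal_toReal (measure_ne_top _ _)]
  -- 0 ≤ t < m
  rw [min_eq_left htm.le, sub_zero]
  by_cases hK : (F ⁻¹' Iic t).Nonempty
  · -- sSup argument
    have hKclosed : IsClosed (F ⁻¹' Iic t) := isClosed_Iic.preimage hFcont
    have hbdd : BddAbove (F ⁻¹' Iic t) := by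
      have : ∀ᶠ a in atTop, t < F a :=
        (tendsto_cdf_atTop ρ).eventually (eventually_gt_nhds htm)
      obtain ⟨a₀, ha₀⟩ := this.exists_forall_of_atTop
      refine ⟨a₀, fun x hx => ?_⟩
      by_contra hcon
      exact absurd hx (not_le.2 (ha₀ x (le_of_not_ge hcon)))
    set c := sSup (F ⁻¹' Iic t) with hcdef
    have hcK : c ∈ F ⁻¹' Iic t := hKclosed.csSup_mem hK hbdd
    have hKIic : F ⁻¹' Iic t = Iic c := by
      apply Subset.antisymm (fun x hx => le_csSup hbdd hx)
      intro x hx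
      exact le_trans (hFmono hx) hcK
    have hFc : F c = t := by
      refine le_antisymm hcK ?_
      by_contra hlt
      push_neg at hlt
      have : ∀ᶠ x in 𝓝 c, F x < t := hFcont.continuousAt.eventually_lt_const hlt
      obtain ⟨r, hr, hball⟩ := Metric.eventually_nhds_iff.1 this
      have hmem : c + r / 2 ∈ F ⁻¹' Iic t := by
        refine le_of_lt (hball ?_)
        rw [Real.dist_eq, add_sub_cancel_left, abs_of_pos (by positivity)]
        linarith
      have := le_csSup hbdd hmem
      linarith
    rw [hKIic]
    have : ρ (Iic c) = ENNReal.ofReal (F c) := (ENNReal.ofReal_toReal (measure_ne_top _ _)).symm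
    rw [this, hFc]
  · -- empty case
    have h1 : F ⁻¹' Iic t = ∅ := not_nonempty_iff_eq_empty.1 hK
    rw [h1, measure_empty]
    rcases eq_or_lt_of_le ht with ht0 | ht0
    · rw [← ht0, ENNReal.ofReal_zero]
    · exfalso
      have h2 : Tendsto (fun n : ℕ => (ρ (Iic (-(n : ℝ)))).toReal) atTop (𝓝 0) := by
        have := (ENNReal.tendsto_toReal (a := (0 : ℝ≥0∞)) (by simp)).comp (tendsto_cdf_seq_atBot ρ)
        simpa [Function.comp_def] using this
      obtain ⟨n, hn⟩ := (h2.eventually_lt_const ht0).exists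
      exact hK ⟨-(n:ℝ), le_of_lt hn⟩

lemma growth_ae (ρ : Measure ℝ) [IsFiniteMeasure ρ] [NullSingletonClass ρ] :
    MeasurableSet {a : ℝ | ∀ b, a < b → (ρ (Iic a)).toReal < (ρ (Iic b)).toReal} ∧
      ρ {a : ℝ | ∀ b, a < b → (ρ (Iic a)).toReal < (ρ (Iic b)).toReal}ᶜ = 0 := by
  set F := fun a : ℝ => (ρ (Iic a)).toReal with hF
  have hFmono : Monotone F := fun u v huv =>
    ENNReal.toReal_mono (measure_ne_top _ _) (measure_mono (Iic_subset_Iic.2 huv))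
  have hFmeas : Measurable F := hFmono.measurable
  set s1 := {a : ℝ | ∀ b, a < b → F a < F b} with hs1
  constructor
  · have hset : s1 = ⋂ q : ℚ, (Ici (q : ℝ) ∪ F ⁻¹' Iio (F q)) := by
      ext a
      simp only [hs1, mem_setOf_eq, mem_iInter, mem_union, mem_Ici, mem_preimage, mem_Iio]
      constructor
      · intro h q
        by_cases hq : a < (q : ℝ)
        · exact Or.inr (h _ hq)
        · exact Or.inl (le_of_not_gt hq)
      · intro h b hab
        obtain ⟨q, hq1, hq2⟩ := exists_rat_btwn hab
        rcases h q with h1 | h1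
        · linarith
        · exact lt_of_lt_of_le h1 (hFmono hq2.le)
    rw [hset]
    exact MeasurableSet.iInter fun q => measurableSet_Ici.union (hFmeas measurableSet_Iio)
  · have hsub : s1ᶜ ⊆ ⋃ q : ℚ, {a : ℝ | a < (q : ℝ) ∧ F a = F q} := by
      intro x hx
      simp only [hs1, mem_compl_iff, mem_setOf_eq, not_forall, not_lt] at hx
      obtain ⟨b, hxb, hFba⟩ := hx
      obtain ⟨q, hq1, hq2⟩ := exists_rat_btwn hxb
      have h1 : F x ≤ F q := hFmono hq1.le
      have h2 : F q ≤ F b := hFmono hq2.le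
      refine mem_iUnion.2 ⟨q, hq1, le_antisymm h1 (by linarith)⟩
    refine measure_mono_null hsub (measure_iUnion_null fun q => ?_)
    set A := {a : ℝ | a < (q : ℝ) ∧ F a = F q} with hA
    have hIoc0 : ∀ a ∈ A, ρ (Ioc a (q : ℝ)) = 0 := by
      rintro a ⟨haq, hFa⟩
      have hIic : ρ (Iic (q : ℝ)) = ρ (Iic a) :=
        ((ENNReal.toReal_eq_toReal_iff' (measure_ne_top _ _) (measure_ne_top _ _)).1 hFa).symm
      have : ρ (Ioc a (q : ℝ)) = ρ (Iic (q : ℝ) \ Iic a) := by rw [Iic_sdiff_Iic]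
      rw [this, measure_diff (Iic_subset_Iic.2 haq.le) measurableSet_Iic.nullMeasurableSet
        (measure_ne_top _ _), hIic, tsub_self]
    have hkey : ∀ a ∈ A, ρ A ≤ ρ (A ∩ Iic a) := by
      intro a ha
      have hdec := measure_inter_add_diff A (measurableSet_Iic (a := a)) (μ := ρ)
      have hsub2 : A \ Iic a ⊆ Ioc a (q : ℝ) := by
        rintro x ⟨⟨hxq, _⟩, hxa⟩
        exact ⟨lt_of_not_ge hxa, hxq.le⟩
      have h0 : ρ (A \ Iic a) = 0 :=
        measure_mono_null hsub2 (hIoc0 a ha)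
      rw [← hdec, h0, add_zero]
    by_contra hpos
    have hne : A.Nonempty := nonempty_of_measure_ne_zero hpos
    by_cases hbdd : BddBelow A
    · set u := sInf A with hu
      have h0 : ∀ᶠ δ in 𝓝 (0 : ℝ), ρ (Icc (u - δ) (u + δ)) < ρ A :=
        (tendsto_measure_Icc ρ u).eventually_lt_const (pos_iff_ne_zero.2 hpos)
      obtain ⟨r, hr, hball⟩ := Metric.eventually_nhds_iff.1 h0
      set δ := r / 2 with hδdef
      have hδpos : 0 < δ := by positivity
      have hδ : ρ (Icc (u - δ) (u + δ)) < ρ A := by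
        apply hball
        rw [Real.dist_eq, sub_zero, abs_of_pos hδpos]
        linarith
      obtain ⟨a, haA, ha⟩ := exists_lt_of_csInf_lt hne (by linarith : sInf A < u + δ)
      have hsub3 : A ∩ Iic a ⊆ Icc (u - δ) (u + δ) := by
        rintro x ⟨hxA, hxa⟩
        exact ⟨by linarith [csInf_le hbdd hxA], le_trans (mem_Iic.1 hxa) ha.le⟩
      exact absurd (le_trans (hkey a haA) (measure_mono hsub3)) (not_le.2 hδ)
    · rw [not_bddBelow_iff] at hbdd
      have hle : ∀ n : ℕ, ρ A ≤ ρ (Iic (-(n : ℝ))) := by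
        intro n
        obtain ⟨a, haA, ha⟩ := hbdd (-(n : ℝ))
        calc ρ A ≤ ρ (A ∩ Iic a) := hkey a haA
          _ ≤ ρ (Iic (-(n : ℝ))) :=
            measure_mono (fun x hx => le_trans hx.2 ha.le)
      have := ge_of_tendsto' (tendsto_cdf_seq_atBot ρ) hle
      exact hpos (le_antisymm this zero_le)

lemma exists_emb [StandardBorelSpace X] : ∃ j : X → ℝ, MeasurableEmbedding j := by
  obtain ⟨s, hs, ⟨e⟩⟩ := MeasureTheory.exists_subset_real_measurableEquiv X
  exact ⟨fun x => (e x : ℝ), (MeasurableEmbedding.subtype_coe hs).comp e.measurableEmbedding⟩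

lemma noAtoms_map (μ : Measure X) [NullSingletonClass μ] {j : X → ℝ} (hj : MeasurableEmbedding j)
    (P : Set X) : NullSingletonClass ((μ.restrict P).map j) := by
  constructor
  intro x
  rw [Measure.map_apply hj.measurable (measurableSet_singleton x)]
  have : (j ⁻¹' {x}).Subsingleton := fun a ha b hb => hj.injective (ha.trans hb.symm)
  exact this.measure_zero _

lemma cdf_package (μ : Measure X) [IsFiniteMeasure μ] [NullSingletonClass μ]
    {j : X → ℝ} (hj : MeasurableEmbedding j) {P : Set X} (hP : MeasurableSet P) :
    ∃ (φ : X → ℝ) (P1 : Set X), Measurable φ ∧ MeasurableSet P1 ∧ P1 ⊆ P ∧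
      μ (P \ P1) = 0 ∧ InjOn φ P1 ∧
      (μ.restrict P).map φ = volume.restrict (Ioc 0 (μ P).toReal) := by
  set ρ := (μ.restrict P).map j with hρ
  haveI : NullSingletonClass ρ := noAtoms_map μ hj P
  set F := fun a : ℝ => (ρ (Iic a)).toReal with hF
  have hFmono : Monotone F := fun u v huv =>
    ENNReal.toReal_mono (measure_ne_top _ _) (measure_mono (Iic_subset_Iic.2 huv))
  have hFmeas : Measurable F := hFmono.measurable
  set s1 := {a : ℝ | ∀ b, a < b → F a < F b} with hs1
  obtain ⟨hs1m, hs1null⟩ := growth_ae ρ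
  have hρuniv : ρ univ = μ P := by
    rw [hρ, Measure.map_apply hj.measurable MeasurableSet.univ, preimage_univ,
      Measure.restrict_apply_univ]
  refine ⟨F ∘ j, P ∩ j ⁻¹' s1, hFmeas.comp hj.measurable,
    hP.inter (hj.measurable hs1m), inter_subset_left, ?_, ?_, ?_⟩
  · have hset : P \ (P ∩ j ⁻¹' s1) = j ⁻¹' s1ᶜ ∩ P := by
      ext x
      simp only [mem_diff, mem_inter_iff, mem_preimage, mem_compl_iff]
      tauto
    rw [hset, ← Measure.restrict_apply (hj.measurable hs1m.compl),
      ← Measure.map_apply hj.measurable hs1m.compl]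
    exact hs1null
  · intro a ha b hb heq
    simp only [Function.comp_apply] at heq
    rcases lt_trichotomy (j a) (j b) with h | h | h
    · exact absurd heq (ne_of_lt (ha.2 _ h))
    · exact hj.injective h
    · exact absurd heq.symm (ne_of_lt (hb.2 _ h))
  · rw [← Measure.map_map hFmeas hj.measurable, ← hρ, ← hρuniv]
    exact map_cdf ρ
  -- note: ha.2 refers to membership in j⁻¹' s1

lemma exists_subset_meas_eq [StandardBorelSpace X] (μ : Measure X) [IsFiniteMeasure μ]
    [NullSingletonClass μ] {s : Set X} (hs : MeasurableSet s) {r : ℝ≥0∞} (hr : r ≤ μ s) :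
    ∃ t, MeasurableSet t ∧ t ⊆ s ∧ μ t = r := by
  rcases eq_or_lt_of_le hr with heq | hlt
  · exact ⟨s, hs, Subset.rfl, heq.symm⟩
  rcases eq_or_ne r 0 with h0 | h0
  · exact ⟨∅, MeasurableSet.empty, empty_subset _, by rw [h0, measure_empty]⟩
  have hrtop : r ≠ ⊤ := ne_top_of_le_ne_top (measure_ne_top _ _) hr
  obtain ⟨j, hj⟩ := exists_emb (X := X)
  set ρ := (μ.restrict s).map j with hρ
  haveI : NullSingletonClass ρ := noAtoms_map μ hj s
  set F := fun a : ℝ => (ρ (Iic a)).toReal with hF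
  have hFcont : Continuous F := continuous_cdf ρ
  have hρuniv : ρ univ = μ s := by
    rw [hρ, Measure.map_apply hj.measurable MeasurableSet.univ, preimage_univ,
      Measure.restrict_apply_univ]
  set r' := r.toReal with hr'
  have hr'pos : 0 < r' := ENNReal.toReal_pos h0 hrtop
  have hr'M : r' < (ρ univ).toReal := by
    rw [hρuniv]
    exact ENNReal.toReal_strict_mono (measure_ne_top _ _) hlt
  have hlow : Tendsto (fun n : ℕ => F (-(n : ℝ))) atTop (𝓝 0) := by
    have := (ENNReal.tendsto_toReal (a := (0 : ℝ≥0∞)) (by simp)).comp (tendsto_cdf_seq_atBot ρ)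
    simpa [Function.comp_def, hF] using this
  obtain ⟨n, hn⟩ := (hlow.eventually_lt_const hr'pos).exists
  have hup : ∀ᶠ b in atTop, r' < F b :=
    (tendsto_cdf_atTop ρ).eventually (eventually_gt_nhds hr'M)
  obtain ⟨b, hb⟩ := hup.exists
  obtain ⟨c, hc⟩ := intermediate_value_univ (-(n : ℝ)) b hFcont ⟨hn.le, hb.le⟩
  refine ⟨s ∩ j ⁻¹' Iic c, hs.inter (hj.measurable measurableSet_Iic), inter_subset_left, ?_⟩
  have : μ (s ∩ j ⁻¹' Iic c) = ρ (Iic c) := by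
    rw [hρ, Measure.map_apply hj.measurable measurableSet_Iic,
      Measure.restrict_apply (hj.measurable measurableSet_Iic), inter_comm]
  rw [this, ← ENNReal.ofReal_toReal (measure_ne_top ρ (Iic c))]
  rw [show (ρ (Iic c)).toReal = F c from rfl, hc, hr', ENNReal.ofReal_toReal hrtop]

lemma exists_swap [StandardBorelSpace X] [Nonempty X] (μ : Measure X) [IsFiniteMeasure μ]
    [NullSingletonClass μ] {P Q : Set X} (hP : MeasurableSet P) (hQ : MeasurableSet Q)
    (hdisj : Disjoint P Q) (heq : μ P = μ Q) :
    ∃ W : X ≃ᵐ X, MeasurePreserving W μ μ ∧ (∀ x, W (W x) = x) ∧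
      (∀ x, W x ≠ x → x ∈ P ∪ Q) ∧ μ (W '' P \ Q) = 0 := by
  classical
  obtain ⟨j, hj⟩ := exists_emb (X := X)
  obtain ⟨φP, P1, hφPm, hP1m, hP1s, hP1null, hφPinj, hmapP⟩ := cdf_package μ hj hP
  obtain ⟨φQ, Q1, hφQm, hQ1m, hQ1s, hQ1null, hφQinj, hmapQ⟩ := cdf_package μ hj hQ
  set m := (μ P).toReal with hm
  rw [← heq] at hmapQ
  -- subtype embeddings
  haveI : StandardBorelSpace ↥P1 := hP1m.standardBorel
  haveI : StandardBorelSpace ↥Q1 := hQ1m.standardBorel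
  set eP : ↥P1 → ℝ := fun x => φP x with heP
  set eQ : ↥Q1 → ℝ := fun x => φQ x with heQ
  have hEP : MeasurableEmbedding eP :=
    (hφPm.comp measurable_subtype_coe).measurableEmbedding
      (fun x y h => Subtype.ext (hφPinj x.2 y.2 h))
  have hEQ : MeasurableEmbedding eQ :=
    (hφQm.comp measurable_subtype_coe).measurableEmbedding
      (fun x y h => Subtype.ext (hφQinj x.2 y.2 h))
  obtain ⟨gP, hgPm, hgPe⟩ := hEP.exists_measurable_extend
    (measurable_subtype_coe) (fun _ => ‹Nonempty X›)
  obtain ⟨gQ, hgQm, hgQe⟩ := hEQ.exists_measurable_extend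
    (measurable_subtype_coe) (fun _ => ‹Nonempty X›)
  have hgPinv : ∀ x (hx : x ∈ P1), gP (φP x) = x := fun x hx => congrFun hgPe ⟨x, hx⟩
  have hgQinv : ∀ x (hx : x ∈ Q1), gQ (φQ x) = x := fun x hx => congrFun hgQe ⟨x, hx⟩
  set IP := range eP with hIP
  set IQ := range eQ with hIQ
  have hIPm : MeasurableSet IP := hEP.measurableSet_range
  have hIQm : MeasurableSet IQ := hEQ.measurableSet_range
  set J := IP ∩ IQ ∩ Ioc 0 m with hJ
  have hJm : MeasurableSet J := (hIPm.inter hIQm).inter measurableSet_Ioc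
  have hJIoc : J ⊆ Ioc 0 m := inter_subset_right
  -- fullness of the images
  have himgP : ∀ x ∈ P1, φP x ∈ IP := fun x hx => ⟨⟨x, hx⟩, rfl⟩
  have himgQ : ∀ x ∈ Q1, φQ x ∈ IQ := fun x hx => ⟨⟨x, hx⟩, rfl⟩
  have hfullP : volume (Ioc 0 m \ IP) = 0 := by
    have h1 : volume (Ioc 0 m \ IP) = volume.restrict (Ioc 0 m) IPᶜ := by
      rw [Measure.restrict_apply hIPm.compl, compl_eq_univ_diff, inter_comm]
      simp [inter_univ, diff_eq, inter_comm]
    rw [h1, ← hmapP, Measure.map_apply hφPm hIPm.compl,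
      Measure.restrict_apply (hφPm hIPm.compl)]
    refine measure_mono_null (fun x hx => ?_) hP1null
    rcases hx with ⟨hx1, hx2⟩
    refine ⟨hx2, fun hx3 => hx1 (himgP x hx3)⟩
  have hfullQ : volume (Ioc 0 m \ IQ) = 0 := by
    have h1 : volume (Ioc 0 m \ IQ) = volume.restrict (Ioc 0 m) IQᶜ := by
      rw [Measure.restrict_apply hIQm.compl, compl_eq_univ_diff, inter_comm]
      simp [inter_univ, diff_eq, inter_comm]
    rw [h1, ← hmapQ, Measure.map_apply hφQm hIQm.compl,
      Measure.restrict_apply (hφQm hIQm.compl)]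
    refine measure_mono_null (fun x hx => ?_) hQ1null
    rcases hx with ⟨hx1, hx2⟩
    refine ⟨hx2, fun hx3 => hx1 (himgQ x hx3)⟩
  have hJfull : volume (Ioc 0 m \ J) = 0 := by
    refine measure_mono_null ?_ (measure_union_null hfullP hfullQ)
    rintro x ⟨hx1, hx2⟩
    simp only [hJ, mem_inter_iff, not_and] at hx2
    by_cases hP' : x ∈ IP
    · by_cases hQ' : x ∈ IQ
      · exact absurd hx1 (by tauto)
      · exact Or.inr ⟨hx1, hQ'⟩
    · exact Or.inl ⟨hx1, hP'⟩
  set P2 := P1 ∩ φP ⁻¹' J with hP2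
  set Q2 := Q1 ∩ φQ ⁻¹' J with hQ2
  have hP2m : MeasurableSet P2 := hP1m.inter (hφPm hJm)
  have hQ2m : MeasurableSet Q2 := hQ1m.inter (hφQm hJm)
  have hP2P : P2 ⊆ P := fun x hx => hP1s hx.1
  have hQ2Q : Q2 ⊆ Q := fun x hx => hQ1s hx.1
  have hP2null : μ (P \ P2) = 0 := by
    have hcompl : μ (P ∩ φP ⁻¹' Jᶜ) = 0 := by
      rw [inter_comm, ← Measure.restrict_apply (hφPm hJm.compl),
        ← Measure.map_apply hφPm hJm.compl, hmapP,
        Measure.restrict_apply hJm.compl]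
      refine measure_mono_null ?_ hJfull
      rintro x ⟨hx1, hx2⟩
      exact ⟨hx2, fun h => hx1 h⟩
    refine measure_mono_null ?_ (measure_union_null hP1null hcompl)
    rintro x ⟨hx1, hx2⟩
    simp only [hP2, mem_inter_iff, not_and, mem_preimage] at hx2
    by_cases h1 : x ∈ P1
    · exact Or.inr ⟨hx1, fun h => hx2 h1 h⟩
    · exact Or.inl ⟨hx1, h1⟩
  have hQ2null : μ (Q \ Q2) = 0 := by
    have hcompl : μ (Q ∩ φQ ⁻¹' Jᶜ) = 0 := by
      rw [inter_comm, ← Measure.restrict_apply (hφQm hJm.compl),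
        ← Measure.map_apply hφQm hJm.compl, hmapQ,
        Measure.restrict_apply hJm.compl]
      refine measure_mono_null ?_ hJfull
      rintro x ⟨hx1, hx2⟩
      exact ⟨hx2, fun h => hx1 h⟩
    refine measure_mono_null ?_ (measure_union_null hQ1null hcompl)
    rintro x ⟨hx1, hx2⟩
    simp only [hQ2, mem_inter_iff, not_and, mem_preimage] at hx2
    by_cases h1 : x ∈ Q1
    · exact Or.inr ⟨hx1, fun h => hx2 h1 h⟩
    · exact Or.inl ⟨hx1, h1⟩
  -- pointwise facts
  have hgQJ : ∀ t ∈ J, gQ t ∈ Q2 ∧ φQ (gQ t) = t := by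
    rintro t htJ
    obtain ⟨y, hy⟩ : t ∈ IQ := htJ.1.2
    have h1 : gQ t = (y : X) := by rw [← hy]; exact congrFun hgQe y
    have h2 : φQ (gQ t) = t := by rw [h1, ← hy]
    refine ⟨⟨mem_of_eq_of_mem h1 y.2, ?_⟩, h2⟩
    rw [mem_preimage, h2]; exact htJ
  have hgPJ : ∀ t ∈ J, gP t ∈ P2 ∧ φP (gP t) = t := by
    rintro t htJ
    obtain ⟨y, hy⟩ : t ∈ IP := htJ.1.1
    have h1 : gP t = (y : X) := by rw [← hy]; exact congrFun hgPe y
    have h2 : φP (gP t) = t := by rw [h1, ← hy]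
    refine ⟨⟨mem_of_eq_of_mem h1 y.2, ?_⟩, h2⟩
    rw [mem_preimage, h2]; exact htJ
  have hdisj2 : Disjoint P2 Q2 := hdisj.mono hP2P hQ2Q
  -- the map
  set W : X → X := P2.piecewise (gQ ∘ φP) (Q2.piecewise (gP ∘ φQ) id) with hW
  have hWP2 : ∀ x ∈ P2, W x = gQ (φP x) := fun x hx => Set.piecewise_eq_of_mem _ _ _ hx
  have hWQ2 : ∀ x ∈ Q2, W x = gP (φQ x) := by
    intro x hx
    rw [hW, Set.piecewise_eq_of_notMem _ _ _ (disjoint_right.1 hdisj2 hx),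
      Set.piecewise_eq_of_mem _ _ _ hx]
    rfl
  have hWid : ∀ x, x ∉ P2 → x ∉ Q2 → W x = x := by
    intro x h1 h2
    rw [hW, Set.piecewise_eq_of_notMem _ _ _ h1, Set.piecewise_eq_of_notMem _ _ _ h2, id]
  have hWW : ∀ x, W (W x) = x := by
    intro x
    by_cases h1 : x ∈ P2
    · rw [hWP2 x h1]
      obtain ⟨hmem, hval⟩ := hgQJ (φP x) h1.2
      rw [hWQ2 _ hmem, hval]
      exact hgPinv x h1.1
    by_cases h2 : x ∈ Q2
    · rw [hWQ2 x h2]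
      obtain ⟨hmem, hval⟩ := hgPJ (φQ x) h2.2
      rw [hWP2 _ hmem, hval]
      exact hgQinv x h2.1
    · rw [hWid x h1 h2, hWid x h1 h2]
  have hWmeas : Measurable W :=
    Measurable.piecewise hP2m (hgQm.comp hφPm)
      (Measurable.piecewise hQ2m (hgPm.comp hφQm) measurable_id)
  set Weq : X ≃ᵐ X :=
    { toEquiv := ⟨W, W, hWW, hWW⟩
      measurable_toFun := hWmeas
      measurable_invFun := hWmeas } with hWeq
  -- measure preservation
  have hkey : ∀ s : Set X, MeasurableSet s → μ (W ⁻¹' s) = μ s := by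
    intro s hs
    have hdecomp : ∀ E : Set X, μ E = μ (E ∩ P2) + μ (E ∩ Q2) + μ (E \ (P2 ∪ Q2)) := by
      intro E
      have h1 := measure_inter_add_diff E hP2m (μ := μ)
      have h2 := measure_inter_add_diff (E \ P2) hQ2m (μ := μ)
      have e1 : E \ P2 ∩ Q2 = E ∩ Q2 := by
        ext x
        simp only [mem_diff, mem_inter_iff]
        have : x ∈ Q2 → x ∉ P2 := fun h => Set.disjoint_right.1 hdisj2 h
        tauto
      have e2 : (E \ P2) \ Q2 = E \ (P2 ∪ Q2) := by rw [diff_diff]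
      rw [e1, e2] at h2
      rw [← h1, ← h2, add_assoc]
    -- compute pieces via the real line
    have hcompP : ∀ u : Set ℝ, MeasurableSet u → μ (P2 ∩ φP ⁻¹' u) = volume (J ∩ u) := by
      intro u hu
      rw [← measure_inter_eq_of_diff_null μ hP2P hP2null (φP ⁻¹' u), inter_comm,
        ← Measure.restrict_apply (hφPm hu), ← Measure.map_apply hφPm hu, hmapP,
        Measure.restrict_apply hu, inter_comm,
        measure_inter_eq_of_diff_null volume hJIoc hJfull u]
    have hcompQ : ∀ u : Set ℝ, MeasurableSet u → μ (Q2 ∩ φQ ⁻¹' u) = volume (J ∩ u) := by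
      intro u hu
      rw [← measure_inter_eq_of_diff_null μ hQ2Q hQ2null (φQ ⁻¹' u), inter_comm,
        ← Measure.restrict_apply (hφQm hu), ← Measure.map_apply hφQm hu, hmapQ,
        Measure.restrict_apply hu, inter_comm,
        measure_inter_eq_of_diff_null volume hJIoc hJfull u]
    have e1 : W ⁻¹' s ∩ P2 = P2 ∩ φP ⁻¹' (gQ ⁻¹' s) := by
      ext x
      simp only [mem_inter_iff, mem_preimage]
      constructor
      · rintro ⟨hx1, hx2⟩
        refine ⟨hx2, ?_⟩
        rwa [hWP2 x hx2] at hx1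
      · rintro ⟨hx1, hx2⟩
        exact ⟨show W x ∈ s by rw [hWP2 x hx1]; exact hx2, hx1⟩
    have e2 : s ∩ Q2 = Q2 ∩ φQ ⁻¹' (gQ ⁻¹' s) := by
      ext x
      simp only [mem_inter_iff, mem_preimage]
      constructor
      · rintro ⟨hx1, hx2⟩
        refine ⟨hx2, ?_⟩
        rwa [hgQinv x hx2.1]
      · rintro ⟨hx1, hx2⟩
        rw [hgQinv x hx1.1] at hx2
        exact ⟨hx2, hx1⟩
    have e3 : W ⁻¹' s ∩ Q2 = Q2 ∩ φQ ⁻¹' (gP ⁻¹' s) := by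
      ext x
      simp only [mem_inter_iff, mem_preimage]
      constructor
      · rintro ⟨hx1, hx2⟩
        refine ⟨hx2, ?_⟩
        rwa [hWQ2 x hx2] at hx1
      · rintro ⟨hx1, hx2⟩
        exact ⟨show W x ∈ s by rw [hWQ2 x hx1]; exact hx2, hx1⟩
    have e4 : s ∩ P2 = P2 ∩ φP ⁻¹' (gP ⁻¹' s) := by
      ext x
      simp only [mem_inter_iff, mem_preimage]
      constructor
      · rintro ⟨hx1, hx2⟩
        refine ⟨hx2, ?_⟩
        rwa [hgPinv x hx2.1]
      · rintro ⟨hx1, hx2⟩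
        rw [hgPinv x hx1.1] at hx2
        exact ⟨hx2, hx1⟩
    have e5 : W ⁻¹' s \ (P2 ∪ Q2) = s \ (P2 ∪ Q2) := by
      ext x
      simp only [mem_diff, mem_preimage, mem_union]
      constructor
      · rintro ⟨hx1, hx2⟩
        push_neg at hx2
        rw [hWid x hx2.1 hx2.2] at hx1
        exact ⟨hx1, by tauto⟩
      · rintro ⟨hx1, hx2⟩
        push_neg at hx2
        exact ⟨by rw [hWid x hx2.1 hx2.2]; exact hx1, by tauto⟩
    rw [hdecomp (W ⁻¹' s), hdecomp s, e1, e3, e5, e2, e4,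
      hcompP _ (hgQm hs), hcompQ _ (hgQm hs), hcompP _ (hgPm hs), hcompQ _ (hgPm hs)]
    ring
  refine ⟨Weq, ⟨hWmeas, Measure.ext fun s hs => ?_⟩, hWW, ?_, ?_⟩
  · show (μ.map W) s = μ s
    rw [Measure.map_apply hWmeas hs]
    exact hkey s hs
  · intro x hx
    by_cases h1 : x ∈ P2
    · exact Or.inl (hP2P h1)
    by_cases h2 : x ∈ Q2
    · exact Or.inr (hQ2Q h2)
    · exact absurd (hWid x h1 h2) hx
  · have himg : (Weq '' P : Set X) ⊆ Q ∪ (P \ P2) := by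
      rintro y ⟨x, hxP, rfl⟩
      by_cases h1 : x ∈ P2
      · have : Weq x = gQ (φP x) := hWP2 x h1
        rw [this]
        exact Or.inl (hQ2Q (hgQJ (φP x) h1.2).1)
      by_cases h2 : x ∈ Q2
      · exact absurd (hQ2Q h2) (disjoint_left.1 hdisj hxP)
      · have : Weq x = x := hWid x h1 h2
        rw [this]
        exact Or.inr ⟨hxP, h1⟩
    refine measure_mono_null (fun y hy => ?_) hP2null
    rcases himg hy.1 with h | h
    · exact absurd h hy.2
    · exact h

lemma measurableSet_ne_fun [StandardBorelSpace X]
    {f g : X → X} (hf : Measurable f) (hg : Measurable g) :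
    MeasurableSet {x | f x ≠ g x} := by
  letI := upgradeStandardBorel X
  have hd : MeasurableSet {p : X × X | p.1 = p.2} :=
    (isClosed_eq continuous_fst continuous_snd).measurableSet
  exact ((hf.prodMk hg) hd).compl

end Stmt18Aux

open Stmt18Aux

/-- In `Aut*(X,μ)` of a standard probability space: for a Borel set `A` with
`μ(A) < 1 - 2⁻ᵏ` and `B ⊇ A` with `μ(B ∖ A) = 2⁻ᵏ`, one has
`{T : μ(T(A) ∖ A) ≤ 2⁻ᵏ} = H_{X∖A} · G(A,B)`: a non-singular `T` satisfies
`μ(T(A) ∖ A) ≤ 2⁻ᵏ` iff `T = U ∘ V` (mod null) with `U` measure-preserving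
supported in `X ∖ A` and `V` non-singular with `V(A) ⊆ B` mod null. -/
theorem stmt_18 {X : Type*} [MeasurableSpace X] [StandardBorelSpace X]
    (μ : Measure X) [IsProbabilityMeasure μ] [NullSingletonClass μ] (k : ℕ)
    (A B : Set X) (hA : MeasurableSet A) (hB : MeasurableSet B) (hAB : A ⊆ B)
    (hAsmall : μ A + (2 : ℝ≥0∞)⁻¹ ^ k < 1)
    (hBA : μ (B \ A) = (2 : ℝ≥0∞)⁻¹ ^ k)
    (T : X ≃ᵐ X) (hT : ∀ s : Set X, MeasurableSet s → (μ (T ⁻¹' s) = 0 ↔ μ s = 0)) :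
    μ (T '' A \ A) ≤ (2 : ℝ≥0∞)⁻¹ ^ k ↔
      ∃ U V : X ≃ᵐ X,
        MeasurePreserving U μ μ ∧ μ ({x | U x ≠ x} ∩ A) = 0 ∧
        (∀ s : Set X, MeasurableSet s → (μ (V ⁻¹' s) = 0 ↔ μ s = 0)) ∧
        μ (V '' A \ B) = 0 ∧
        (⇑T : X → X) =ᵐ[μ] (fun x => U (V x)) := by
  classical
  haveI : Nonempty X := by
    have h : (univ : Set X).Nonempty :=
      nonempty_of_measure_ne_zero (by simp : μ univ ≠ 0)
    exact Set.nonempty_iff_univ_nonempty.2 h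
  constructor
  · intro hle
    set S := T '' A \ A with hS
    have hTA : MeasurableSet (T '' A) := by
      rw [MeasurableEquiv.image_eq_preimage_symm]; exact T.symm.measurable hA
    have hSm : MeasurableSet S := hTA.diff hA
    set C := B \ A with hC
    have hCm : MeasurableSet C := hB.diff hA
    set P := S \ B with hP
    have hPm : MeasurableSet P := hSm.diff hB
    set D := C \ S with hD
    have hDm : MeasurableSet D := hCm.diff hSm
    have hPD : μ P ≤ μ D := by
      have h1 : μ (S ∩ C) + μ (S \ C) = μ S := measure_inter_add_diff S hCm
      have h2 : μ (S ∩ C) + μ (C \ S) = μ C := by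
        rw [inter_comm]; exact measure_inter_add_diff C hSm
      have hSC : S \ C = P := by
        ext x
        constructor
        · rintro ⟨hxS, hxC⟩
          exact ⟨hxS, fun hxB => hxC ⟨hxB, hxS.2⟩⟩
        · rintro ⟨hxS, hxB⟩
          exact ⟨hxS, fun hxC => hxB hxC.1⟩
      rw [hSC] at h1
      have hle2 : μ S ≤ μ C := by rw [hC, hBA]; exact hle
      have h3 : μ (S ∩ C) + μ P ≤ μ (S ∩ C) + μ D := by
        rw [h1, h2]; exact hle2
      exact (ENNReal.add_le_add_iff_left (measure_ne_top μ _)).1 h3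
    by_cases hP0 : μ P = 0
    · refine ⟨MeasurableEquiv.refl X, T, ?_, ?_, hT, ?_, ?_⟩
      · exact ⟨(MeasurableEquiv.refl X).measurable,
          by rw [show ⇑(MeasurableEquiv.refl X) = id from rfl, Measure.map_id]⟩
      · have : {x | (MeasurableEquiv.refl X) x ≠ x} ∩ A = ∅ := by
          ext x; simp
        rw [this]; exact measure_empty
      · refine measure_mono_null (fun x hx => ?_) hP0
        rcases hx with ⟨hxT, hxB⟩
        exact ⟨⟨hxT, fun hxA => hxB (hAB hxA)⟩, hxB⟩
      · exact Filter.Eventually.of_forall fun x => rfl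
    · obtain ⟨Q', hQ'm, hQ'D, hQ'eq⟩ := exists_subset_meas_eq μ hDm hPD
      have hdisj : Disjoint P Q' := by
        refine disjoint_left.2 fun x hxP hxQ => ?_
        exact (hQ'D hxQ).2 hxP.1
      obtain ⟨W, hWpres, hWW, hWsupp, hWimg⟩ := exists_swap μ hPm hQ'm hdisj hQ'eq.symm
      refine ⟨W, T.trans W, hWpres, ?_, ?_, ?_, ?_⟩
      · have hempty : {x | W x ≠ x} ∩ A = ∅ := by
          ext x
          simp only [mem_inter_iff, mem_setOf_eq, mem_empty_iff_false, iff_false, not_and]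
          intro hWx hxA
          rcases (Set.mem_union _ _ _).1 (hWsupp x hWx) with h | h
          · exact h.1.2 hxA
          · exact (hQ'D h).1.2 hxA
        rw [hempty]; exact measure_empty
      · intro s hs
        have hpre : ⇑(T.trans W) ⁻¹' s = ⇑T ⁻¹' (⇑W ⁻¹' s) := rfl
        rw [hpre, hT (⇑W ⁻¹' s) (hWpres.measurable hs),
          hWpres.measure_preimage hs.nullMeasurableSet]
      · have himage : ⇑(T.trans W) '' A = ⇑W '' (⇑T '' A) := image_comp (⇑W) (⇑T) A
        refine measure_mono_null ?_ hWimg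
        rintro y ⟨hyV, hyB⟩
        rw [himage] at hyV
        obtain ⟨x, hxTA, rfl⟩ := hyV
        by_cases hxA : x ∈ A
        · by_cases hWx : W x = x
          · exact absurd (hAB hxA) (by rwa [hWx] at hyB)
          · rcases (Set.mem_union _ _ _).1 (hWsupp x hWx) with h | h
            · exact absurd hxA h.1.2
            · exact absurd hxA (hQ'D h).1.2
        · have hxS : x ∈ S := ⟨hxTA, hxA⟩
          by_cases hxB : x ∈ B
          · have hWx : W x = x := by
              by_contra hne
              rcases (Set.mem_union _ _ _).1 (hWsupp x hne) with h | h
              · exact h.2 hxB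
              · exact (hQ'D h).2 hxS
            rw [hWx] at hyB
            exact absurd hxB hyB
          · have hxP : x ∈ P := ⟨hxS, hxB⟩
            exact ⟨mem_image_of_mem _ hxP, fun hyQ => hyB ((hQ'D hyQ).1.1)⟩
      · exact Filter.Eventually.of_forall fun x => (hWW (T x)).symm
  · rintro ⟨U, V, hUpres, hUA, hVns, hVB, hae⟩
    set N := {x | T x ≠ U (V x)} with hN
    have hNm : MeasurableSet N :=
      measurableSet_ne_fun T.measurable (hUpres.measurable.comp V.measurable)
    have hNnull : μ N = 0 := by
      have := ae_iff.1 hae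
      simpa [hN] using this
    have hE : MeasurableSet {x | U x ≠ x} :=
      measurableSet_ne_fun hUpres.measurable measurable_id
    have himgU : ∀ s : Set X, MeasurableSet s → μ (U '' s) = μ s := by
      intro s hs
      rw [MeasurableEquiv.image_eq_preimage_symm]
      exact (MeasurePreserving.symm U hUpres).measure_preimage hs.nullMeasurableSet
    have hTN : μ (T '' N) = 0 := by
      have hTNm : MeasurableSet (T '' N) := by
        rw [MeasurableEquiv.image_eq_preimage_symm]; exact T.symm.measurable hNm
      refine (hT _ hTNm).1 ?_
      have hpre : ⇑T ⁻¹' (T '' N) = N := by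
        ext x
        simp [MeasurableEquiv.image_eq_preimage_symm]
      rw [hpre]; exact hNnull
    have hVA : MeasurableSet (V '' A) := by
      rw [MeasurableEquiv.image_eq_preimage_symm]; exact V.symm.measurable hA
    set R := V '' A \ B with hR
    have hRm : MeasurableSet R := hVA.diff hB
    have hUR : μ (U '' R) = 0 := by rw [himgU R hRm]; exact hVB
    have hUAE : μ (U '' ({x | U x ≠ x} ∩ A)) = 0 := by
      rw [himgU _ (hE.inter hA)]; exact hUA
    have hUC : μ (U '' (B \ A)) = μ (B \ A) := himgU _ (hB.diff hA)
    have hincl : T '' A \ A ⊆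
        T '' N ∪ U '' R ∪ U '' ({x | U x ≠ x} ∩ A) ∪ U '' (B \ A) := by
      rintro y ⟨⟨x, hxA, rfl⟩, hyA⟩
      by_cases hxN : x ∈ N
      · exact Or.inl (Or.inl (Or.inl (mem_image_of_mem _ hxN)))
      · have hTx : T x = U (V x) := not_ne_iff.1 hxN
        by_cases hVR : V x ∈ R
        · rw [hTx]; exact Or.inl (Or.inl (Or.inr (mem_image_of_mem _ hVR)))
        · have hVB' : V x ∈ B := by
            by_contra h
            exact hVR ⟨mem_image_of_mem _ hxA, h⟩
          by_cases hVA' : V x ∈ A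
          · by_cases hU : U (V x) = V x
            · exact absurd (show T x ∈ A by rw [hTx, hU]; exact hVA') hyA
            · rw [hTx]; exact Or.inl (Or.inr (mem_image_of_mem _ ⟨hU, hVA'⟩))
          · rw [hTx]; exact Or.inr (mem_image_of_mem _ ⟨hVB', hVA'⟩)
    have hfin : μ (T '' A \ A) ≤
        μ (T '' N) + μ (U '' R) + μ (U '' ({x | U x ≠ x} ∩ A)) + μ (U '' (B \ A)) := by
      refine le_trans (measure_mono hincl) ?_
      refine le_trans (measure_union_le _ _) (add_le_add ?_ le_rfl)
      refine le_trans (measure_union_le _ _) (add_le_add ?_ le_rfl)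
      exact measure_union_le _ _
    rw [hTN, hUR, hUAE, hUC, hBA] at hfin
    simpa using hfin
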